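/- For every integer M > 3, the number of elements of the interior honeycomb point set H̃_M equals (M² − 3M)/3 if M ≡ 0 (mod 3), and (M² − 3M + 2)/3 otherwise. -/

import Mathlib

open Finset

/-- The point set `F_{P,M}`: triples of nonnegative integers summing to `M`. -/
def FPM (M : ℕ) : Finset (ℕ × ℕ × ℕ) :=
  (Finset.range (M+1) ×ˢ Finset.range (M+1) ×ˢ Finset.range (M+1)).filter
    (fun s => s.1 + s.2.1 + s.2.2 = M)

/-- The point set `F_{Q,M}`: triples of `F_{P,M}` with `s1 + 2 s2 ≡ 0 (mod 3)`. -/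
def FQM (M : ℕ) : Finset (ℕ × ℕ × ℕ) :=
  (FPM M).filter (fun s => (s.2.1 + 2 * s.2.2) % 3 = 0)

/-- The honeycomb point set `H_M = F_{P,M} \ F_{Q,M}`. -/
def HM (M : ℕ) : Finset (ℕ × ℕ × ℕ) := FPM M \ FQM M

/-- The interior point set `F̃_{P,M}`: triples of strictly positive integers summing to `M`. -/
def FPMint (M : ℕ) : Finset (ℕ × ℕ × ℕ) :=
  (FPM M).filter (fun s => 0 < s.1 ∧ 0 < s.2.1 ∧ 0 < s.2.2)

/-- The interior point set `F̃_{Q,M}`. -/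
def FQMint (M : ℕ) : Finset (ℕ × ℕ × ℕ) :=
  (FPMint M).filter (fun s => (s.2.1 + 2 * s.2.2) % 3 = 0)

/-- The interior honeycomb point set `H̃_M = F̃_{P,M} \ F̃_{Q,M}`. -/
def HMint (M : ℕ) : Finset (ℕ × ℕ × ℕ) := FPMint M \ FQMint M

/-- The weight set `L_M ⊆ Λ_{Q,M}`. -/
def LM (M : ℕ) : Finset (ℕ × ℕ × ℕ) :=
  (FPM M).filter (fun l => (l.2.1 < l.1 ∧ l.2.2 < l.1) ∨ (l.1 = l.2.1 ∧ l.2.2 < l.1))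

/-- The interior weight set `L̃_M`: elements of `L_M` with all coordinates positive. -/
def LMint (M : ℕ) : Finset (ℕ × ℕ × ℕ) :=
  (LM M).filter (fun l => 0 < l.1 ∧ 0 < l.2.1 ∧ 0 < l.2.2)

/-- A triple `s ∈ F_{P,M}` is identified with the point `(s1/M, s2/M)`. -/
noncomputable def pt (M : ℕ) (s : ℕ × ℕ × ℕ) : ℝ × ℝ :=
  ((s.2.1 : ℝ) / M, (s.2.2 : ℝ) / M)

/-- The Weyl group orbit of the weight `λ` (ordered list, in `ω`-coordinates). -/
def orbit (l : ℕ × ℕ × ℕ) : List (ℤ × ℤ) :=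
  [(2*(l.2.1:ℤ)+l.2.2, (l.2.1:ℤ)+2*l.2.2),
   (-(l.2.1:ℤ)+l.2.2, (l.2.1:ℤ)+2*l.2.2),
   (-(l.2.1:ℤ)-2*l.2.2, (l.2.1:ℤ)-l.2.2),
   (-(l.2.1:ℤ)-2*l.2.2, -2*(l.2.1:ℤ)-l.2.2),
   (-(l.2.1:ℤ)+l.2.2, -2*(l.2.1:ℤ)-l.2.2),
   (2*(l.2.1:ℤ)+l.2.2, (l.2.1:ℤ)-l.2.2)]

/-- The signs `(+,−,+,−,+,−)` attached to the six orbit points for `S`-functions. -/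
def orbitSigns : List ℤ := [1, -1, 1, -1, 1, -1]

/-- The Weyl orbit `C`-function `Φ_λ` of `A₂`. -/
noncomputable def PhiC (l : ℕ × ℕ × ℕ) (x : ℝ × ℝ) : ℂ :=
  ((orbit l).map (fun p =>
    Complex.exp (2 * Real.pi * Complex.I / 3 * ((p.1 : ℂ) * (x.1 : ℂ) + (p.2 : ℂ) * (x.2 : ℂ))))).sum

/-- The Weyl orbit `S`-function `φ_λ` of `A₂`. -/
noncomputable def PhiS (l : ℕ × ℕ × ℕ) (x : ℝ × ℝ) : ℂ :=
  ((orbitSigns.zip (orbit l)).map (fun p => (p.1 : ℂ) *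
    Complex.exp (2 * Real.pi * Complex.I / 3 * ((p.2.1 : ℂ) * (x.1 : ℂ) + (p.2.2 : ℂ) * (x.2 : ℂ))))).sum

/-- The Hartley kernel `cas t = cos t + sin t`. -/
noncomputable def cas (t : ℝ) : ℝ := Real.cos t + Real.sin t

/-- The Hartley `C`-function `ζ¹_λ` of `A₂`. -/
noncomputable def zetaC (l : ℕ × ℕ × ℕ) (x : ℝ × ℝ) : ℝ :=
  ((orbit l).map (fun p => cas (2 * Real.pi / 3 * ((p.1 : ℝ) * x.1 + (p.2 : ℝ) * x.2)))).sum

/-- The Hartley `S`-function `ζ^e_λ` of `A₂`. -/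
noncomputable def zetaS (l : ℕ × ℕ × ℕ) (x : ℝ × ℝ) : ℝ :=
  ((orbitSigns.zip (orbit l)).map (fun p => (p.1 : ℝ) *
    cas (2 * Real.pi / 3 * ((p.2.1 : ℝ) * x.1 + (p.2.2 : ℝ) * x.2)))).sum

/-- The number of zero entries of a triple. -/
def zeroCount (s : ℕ × ℕ × ℕ) : ℕ :=
  (if s.1 = 0 then 1 else 0) + (if s.2.1 = 0 then 1 else 0) + (if s.2.2 = 0 then 1 else 0)

/-- The discrete function `ε`: values `6, 3, 1` for zero, one, two zero entries. -/
def epsF (s : ℕ × ℕ × ℕ) : ℕ :=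
  if zeroCount s = 0 then 6 else if zeroCount s = 1 then 3 else 1

/-- The discrete function `h_M`: values `1, 2, 6` for zero, one, two zero entries. -/
def hMF (l : ℕ × ℕ × ℕ) : ℕ :=
  if zeroCount l = 0 then 1 else if zeroCount l = 1 then 2 else 6

/-- The elements `γ₀ = id`, `γ₁`, `γ₂` of `Γ_M` acting as cyclic permutations of Kac
coordinates: `γ₁[λ0,λ1,λ2] = [λ2,λ0,λ1]`, `γ₂[λ0,λ1,λ2] = [λ1,λ2,λ0]`. -/
def gam (k : Fin 3) (l : ℕ × ℕ × ℕ) : ℕ × ℕ × ℕ :=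
  if k = 0 then l else if k = 1 then (l.2.2, l.1, l.2.1) else (l.2.1, l.2.2, l.1)

/-- The normalization function `μ` of a triple of extension coefficients. -/
noncomputable def muNorm (a b c : ℂ) : ℝ :=
  ‖a‖ ^ 2 + ‖b‖ ^ 2 + ‖c‖ ^ 2
    - (a * starRingEnd ℂ b + a * starRingEnd ℂ c + b * starRingEnd ℂ c).re

/-- The intertwining function `β` of two triples of extension coefficients. -/
noncomputable def betaFun (a b c a' b' c' : ℂ) : ℂ :=
  2 * (a * starRingEnd ℂ a' + b * starRingEnd ℂ b' + c * starRingEnd ℂ c')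
    - a * (starRingEnd ℂ b' + starRingEnd ℂ c')
    - b * (starRingEnd ℂ a' + starRingEnd ℂ c')
    - c * (starRingEnd ℂ a' + starRingEnd ℂ b')

/-- The extended `C`-function `Φ^t_λ` with extension coefficients `μ0, μ1, μ2`. -/
noncomputable def PhiCExt (μ0 μ1 μ2 : ℂ) (l : ℕ × ℕ × ℕ) (x : ℝ × ℝ) : ℂ :=
  μ0 * PhiC l x + μ1 * PhiC (gam 1 l) x + μ2 * PhiC (gam 2 l) x

/-- The extended `S`-function `φ^t_λ` with extension coefficients `μ0, μ1, μ2`. -/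
noncomputable def PhiSExt (μ0 μ1 μ2 : ℂ) (l : ℕ × ℕ × ℕ) (x : ℝ × ℝ) : ℂ :=
  μ0 * PhiS l x + μ1 * PhiS (gam 1 l) x + μ2 * PhiS (gam 2 l) x

/-- The extended Hartley `C`-function `ζ^{1,t}_λ` with extension coefficients `μ0, μ1, μ2`. -/
noncomputable def zetaCExt (μ0 μ1 μ2 : ℂ) (l : ℕ × ℕ × ℕ) (x : ℝ × ℝ) : ℂ :=
  μ0 * (zetaC l x : ℂ) + μ1 * (zetaC (gam 1 l) x : ℂ) + μ2 * (zetaC (gam 2 l) x : ℂ)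

/-- The extended Hartley `S`-function `ζ^{e,t}_λ` with extension coefficients `μ0, μ1, μ2`. -/
noncomputable def zetaSExt (μ0 μ1 μ2 : ℂ) (l : ℕ × ℕ × ℕ) (x : ℝ × ℝ) : ℂ :=
  μ0 * (zetaS l x : ℂ) + μ1 * (zetaS (gam 1 l) x : ℂ) + μ2 * (zetaS (gam 2 l) x : ℂ)

lemma mem_HMint {M : ℕ} {s : ℕ × ℕ × ℕ} :
    s ∈ HMint M ↔ s.1 + s.2.1 + s.2.2 = M ∧ 0 < s.1 ∧ 0 < s.2.1 ∧ 0 < s.2.2 ∧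
      (s.2.1 + 2 * s.2.2) % 3 ≠ 0 := by
  simp only [HMint, FQMint, FPMint, FPM, Finset.mem_sdiff, Finset.mem_filter,
    Finset.mem_product, Finset.mem_range]
  omega

/-- The "slice" of `HMint` at `s0 = 1`. -/
def sliceSet (M : ℕ) : Finset ℕ :=
  (Finset.Ico 1 M).filter (fun x => x % 3 ≠ (2 * M) % 3)

lemma sliceSet_card (M : ℕ) : 3 * (sliceSet M).card = 2 * M - 2 * (M % 3) := by
  induction M using Nat.strong_induction_on with
  | _ M ih =>
    rcases Nat.lt_or_ge M 4 with h | h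
    · interval_cases M <;> decide
    · obtain ⟨K, rfl⟩ : ∃ K, M = K + 3 := ⟨M - 3, by omega⟩
      have hsplit : Finset.Ico 1 (K + 3) = Finset.Ico 1 K ∪ Finset.Ico K (K + 3) := by
        rw [Finset.Ico_union_Ico_eq_Ico] <;> omega
      have hmod : (2 * (K + 3)) % 3 = (2 * K) % 3 := by omega
      have hKset : Finset.Ico K (K + 3) = {K, K + 1, K + 2} := by
        ext x
        simp [Finset.mem_Ico, Finset.mem_insert]
        omega
      have hdisj : Disjoint (Finset.Ico 1 K) (Finset.Ico K (K + 3)) := by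
        simp [Finset.disjoint_left, Finset.mem_Ico]
        omega
      have hcard2 : ((Finset.Ico K (K + 3)).filter (fun x => x % 3 ≠ (2 * K) % 3)).card = 2 := by
        rw [hKset]
        rw [Finset.filter_insert, Finset.filter_insert, Finset.filter_singleton]
        have h3 : K % 3 = 0 ∨ K % 3 = 1 ∨ K % 3 = 2 := by omega
        rcases h3 with h | h | h
        · rw [if_neg (by omega), if_pos (by omega), if_pos (by omega),
            Finset.card_insert_of_notMem (by simp), Finset.card_singleton]
        · rw [if_pos (by omega), if_neg (by omega), if_pos (by omega),
            Finset.card_insert_of_notMem (by simp), Finset.card_singleton]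
        · rw [if_pos (by omega), if_pos (by omega), if_neg (by omega),
            Finset.card_insert_of_notMem (by simp),
            Finset.card_insert_of_notMem (by simp), Finset.card_empty]
      unfold sliceSet
      rw [hmod, hsplit, Finset.filter_union,
        Finset.card_union_of_disjoint (Finset.disjoint_filter_filter hdisj), hcard2]
      have := ih K (by omega)
      unfold sliceSet at this
      omega

lemma card_step (M : ℕ) : (HMint (M + 1)).card = (HMint M).card + (sliceSet M).card := by
  classical
  rw [← Finset.card_filter_add_card_filter_not (s := HMint (M + 1))
    (p := fun s => s.1 = 1)]
  have h1 : ((HMint (M + 1)).filter (fun s => s.1 = 1)).card = (sliceSet M).card := by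
    apply Finset.card_nbij' (fun s => s.2.1) (fun x => (1, x, M - x))
    · intro a ha
      simp only [Finset.mem_coe, Finset.mem_filter, mem_HMint] at ha
      simp only [Finset.mem_coe, sliceSet, Finset.mem_filter, Finset.mem_Ico]
      omega
    · intro x hx
      simp only [Finset.mem_coe, sliceSet, Finset.mem_filter, Finset.mem_Ico] at hx
      refine Finset.mem_filter.mpr ⟨mem_HMint.mpr ?_, rfl⟩
      show 1 + x + (M - x) = M + 1 ∧ 0 < 1 ∧ 0 < x ∧ 0 < (M - x) ∧
        (x + 2 * (M - x)) % 3 ≠ 0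
      omega
    · intro a ha
      simp only [Finset.mem_coe, Finset.mem_filter, mem_HMint] at ha
      obtain ⟨⟨hsum, _, _, _, _⟩, h1⟩ := ha
      obtain ⟨a0, a1, a2⟩ := a
      simp_all
      omega
    · intro x hx
      rfl
  have h2 : ((HMint (M + 1)).filter (fun s => ¬ s.1 = 1)).card = (HMint M).card := by
    apply Finset.card_nbij' (fun s => (s.1 - 1, s.2.1, s.2.2)) (fun s => (s.1 + 1, s.2.1, s.2.2))
    · intro a ha
      simp only [Finset.mem_coe, Finset.mem_filter, mem_HMint] at ha ⊢
      omega
    · intro a ha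
      simp only [Finset.mem_coe, Finset.mem_filter, mem_HMint] at ha ⊢
      omega
    · intro a ha
      simp only [Finset.mem_coe, Finset.mem_filter, mem_HMint] at ha
      obtain ⟨a0, a1, a2⟩ := a
      simp only []
      have : 1 < a0 := by omega
      simp
      omega
    · intro a ha
      rfl
  rw [h1, h2]
  omega

lemma card_HMint4 : (HMint 4).card = 2 := by decide

/-- counting formula for the interior honeycomb point set `H̃_M`. -/
theorem card_HMint (M : ℕ) (hM : 3 < M) :
    ((HMint M).card : ℚ) =
      if M % 3 = 0 then ((M : ℚ)^2 - 3*M) / 3 else ((M : ℚ)^2 - 3*M + 2) / 3 := by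
  induction M, hM using Nat.le_induction with
  | base => rw [card_HMint4]; norm_num
  | succ M hM ih =>
    have hstep : ((HMint (M + 1)).card : ℚ) = (HMint M).card + (sliceSet M).card := by
      rw [card_step]; push_cast; ring
    have hs := sliceSet_card M
    have h3 : M % 3 = 0 ∨ M % 3 = 1 ∨ M % 3 = 2 := by omega
    rcases h3 with h3 | h3 | h3
    · have h3' : (M + 1) % 3 = 1 := by omega
      rw [h3'] at *
      simp only [h3, if_true] at ih
      norm_num
      have hsq : 3 * ((sliceSet M).card : ℚ) = 2 * M := by
        have : 3 * (sliceSet M).card = 2 * M := by omega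
        exact_mod_cast this
      rw [hstep, ih]
      push_cast
      linear_combination hsq / 3
    · have h3' : (M + 1) % 3 = 2 := by omega
      rw [h3'] at *
      simp only [h3, if_true] at ih
      norm_num at ih ⊢
      have hsq : 3 * ((sliceSet M).card : ℚ) + 2 = 2 * M := by
        have : 3 * (sliceSet M).card + 2 = 2 * M := by omega
        exact_mod_cast this
      rw [hstep, ih]
      push_cast
      linear_combination hsq / 3
    · have h3' : (M + 1) % 3 = 0 := by omega
      rw [h3'] at *
      simp only [h3] at ih
      norm_num at ih ⊢
      have hsq : 3 * ((sliceSet M).card : ℚ) + 4 = 2 * M := by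
        have : 3 * (sliceSet M).card + 4 = 2 * M := by omega
        exact_mod_cast this
      rw [hstep, ih]
      push_cast
      linear_combination hsq / 3
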